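/- Let K be a perfectoid field whose tilt K^♭ is algebraically closed. Then K is algebraically closed. -/

import Mathlib

/-- A perfectoid field, encoded via a rank-1 valuation `Valued K NNReal` plus completeness. -/
def IsPerfectoidField (K : Type*) [Field K] [Valued K NNReal] (p : ℕ) : Prop :=
  (¬ ∃ γ : NNReal, ∀ x : K, x ≠ 0 → ∃ n : ℤ, Valued.v x = γ ^ n) ∧
  Valued.v (p : K) < 1 ∧
  (∀ x : K, Valued.v x ≤ 1 → ∃ y : K, Valued.v y ≤ 1 ∧ Valued.v (x - y ^ p) ≤ Valued.v (p : K))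

open Polynomial

section Aux
variable {K : Type*} [Field K] [Valued K NNReal]

lemma PF.v_natCast_le_one (n : ℕ) : Valued.v (n : K) ≤ 1 := by
  induction n with
  | zero => simp
  | succ k ih =>
    push_cast
    exact le_trans (Valued.v.map_add _ _) (max_le ih (le_of_eq (Valued.v.map_one)))

lemma PF.v_eq_of_sub_lt {a b : K} (h : Valued.v (a - b) < Valued.v a) :
    Valued.v b = Valued.v a := by
  have h1 : Valued.v b ≤ Valued.v a := by
    have : b = a - (a - b) := by ring
    rw [this]
    exact le_trans (Valued.v.map_sub _ _) (max_le le_rfl h.le)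
  refine le_antisymm h1 ?_
  have h2 : Valued.v a ≤ max (Valued.v b) (Valued.v (a - b)) := by
    have he : a = b + (a - b) := by ring
    nth_rewrite 1 [he]; exact Valued.v.map_add _ _
  rcases max_cases (Valued.v b) (Valued.v (a - b)) with ⟨he, _⟩ | ⟨he, _⟩
  · rwa [he] at h2
  · exact absurd (lt_of_le_of_lt (he ▸ h2) h) (lt_irrefl _)

lemma PF.isClosed_vball (s : K) (M : NNReal) :
    IsClosed {u : K | Valued.v (u - s) ≤ M} := by
  rw [← isOpen_compl_iff]
  rw [isOpen_iff_mem_nhds]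
  intro u hu
  simp only [Set.mem_compl_iff, Set.mem_setOf_eq, not_le] at hu
  have hpos : (0 : NNReal) < Valued.v (u - s) := lt_of_le_of_lt (zero_le (a := M)) hu
  rw [Valued.mem_nhds]
  refine ⟨Units.mk0 (Valued.v.restrict (u - s))
    (fun h0 => hpos.ne' (by rw [← Valuation.embedding_restrict, h0, map_zero])), fun y hy => ?_⟩
  simp only [Set.mem_setOf_eq, Units.val_mk0, Valuation.restrict_lt_iff] at hy
  simp only [Set.mem_compl_iff, Set.mem_setOf_eq, not_le]
  have : Valued.v (y - s) = Valued.v (u - s) := by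
    apply PF.v_eq_of_sub_lt
    have : (u - s) - (y - s) = -(y - u) := by ring
    rw [this, Valuation.map_neg]
    exact hy
  rw [this]; exact hu

lemma PF.multiset_sum_lt {s : Multiset K} {P : NNReal} (hP : 0 < P)
    (h : ∀ a ∈ s, Valued.v a < P) : Valued.v s.sum < P := by
  induction s using Multiset.induction_on with
  | empty => simpa using hP
  | cons a t ih =>
    rw [Multiset.sum_cons]
    refine lt_of_le_of_lt (Valued.v.map_add _ _) (max_lt ?_ ?_)
    · exact h a (Multiset.mem_cons_self a t)
    · exact ih fun b hb => h b (Multiset.mem_cons_of_mem hb)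

end Aux

section LemA
variable {L : Type*} [Field L] [Valued L NNReal] [IsAlgClosed L]

/-- Over an algebraically closed valued field, a polynomial with integral coefficients
and some coefficient of index `≥ 1` of valuation `1` has a root in the unit ball. -/
lemma PF.exists_small_root (h : L[X]) (hc : ∀ i, Valued.v (h.coeff i) ≤ 1)
    {j : ℕ} (hj : 1 ≤ j) (hj1 : Valued.v (h.coeff j) = 1) :
    ∃ w : L, h.eval w = 0 ∧ Valued.v w ≤ 1 := by
  letI := Classical.decEq L
  by_contra hcon
  push_neg at hcon
  have hcj : h.coeff j ≠ 0 := by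
    intro h0; rw [h0] at hj1; simp at hj1
  have hne : h ≠ 0 := fun h0 => hcj (by simp [h0])
  have hjd : j ≤ h.natDegree := le_natDegree_of_ne_zero hcj
  set m := h.natDegree with hm
  have hcard : Multiset.card h.roots = m :=
    (splits_iff_card_roots.1 (IsAlgClosed.splits h))
  have hroots_big : ∀ w ∈ h.roots, 1 < Valued.v w := by
    intro w hw
    exact hcon w ((mem_roots hne).1 hw)
  set R := h.roots with hR
  set P : NNReal := (R.map (fun w => Valued.v w)).prod with hP
  have honeleP : 1 ≤ P := by
    refine Multiset.one_le_prod ?_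
    intro x hx
    obtain ⟨w, hw, rfl⟩ := Multiset.mem_map.1 hx
    exact (hroots_big w hw).le
  have hPpos : (0 : NNReal) < P := lt_of_lt_of_le zero_lt_one honeleP
  have hlc : h.leadingCoeff ≠ 0 := leadingCoeff_ne_zero.2 hne
  have hvlc : (0 : NNReal) < Valued.v h.leadingCoeff := by
    simpa [pos_iff_ne_zero] using (Valuation.ne_zero_iff Valued.v).2 hlc
  have hprodv : ∀ S : Multiset L, Valued.v S.prod = (S.map (fun w => Valued.v w)).prod := by
    intro S
    exact map_multiset_prod Valued.v S
  -- valuation of coeff 0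
  have hc0 : Valued.v (h.coeff 0) = Valued.v h.leadingCoeff * P := by
    have hfac := Polynomial.C_leadingCoeff_mul_prod_multiset_X_sub_C hcard
    have hev : h.coeff 0 = h.eval 0 := (Polynomial.coeff_zero_eq_eval_zero h)
    rw [hev]
    conv_lhs => rw [← hfac]
    rw [eval_mul, eval_C, Valuation.map_mul, eval_multiset_prod, Multiset.map_map]
    congr 1
    rw [hprodv, Multiset.map_map]
    congr 1
    ext a
    simp [hR]
  -- each esymm term is strictly below P
  have hterm : ∀ x ∈ (R.powersetCard (m - j)).map Multiset.prod, Valued.v x < P := by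
    intro x hx
    obtain ⟨S, hS, rfl⟩ := Multiset.mem_map.1 hx
    obtain ⟨hSle, hScard⟩ := (Multiset.mem_powersetCard).1 hS
    set T := R - S with hT
    have hST : S + T = R := by
      rw [hT, add_tsub_cancel_of_le hSle]
    have hTcard : Multiset.card T = j := by
      rw [hT, Multiset.card_sub hSle, hScard, hcard]
      omega
    have hTR : ∀ a ∈ T, a ∈ R := fun a ha => Multiset.mem_of_le (Multiset.sub_le_self _ _) ha
    have hTprod : 1 < (T.map (fun w => Valued.v w)).prod := by
      have : 0 < Multiset.card T := by omega
      obtain ⟨a, ha⟩ := Multiset.card_pos_iff_exists_mem.1 this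
      obtain ⟨T', hT'⟩ := Multiset.exists_cons_of_mem ha
      rw [hT', Multiset.map_cons, Multiset.prod_cons]
      calc (1 : NNReal) < Valued.v a := hroots_big a (hTR a ha)
        _ = Valued.v a * 1 := (mul_one _).symm
        _ ≤ Valued.v a * (T'.map (fun w => Valued.v w)).prod := by
            refine mul_le_mul_right ?_ _
            refine Multiset.one_le_prod ?_
            intro x hx
            obtain ⟨w, hw, rfl⟩ := Multiset.mem_map.1 hx
            exact (hroots_big w (hTR w (hT' ▸ Multiset.mem_cons_of_mem hw))).le
    have hSpos : (0 : NNReal) < (S.map (fun w => Valued.v w)).prod := by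
      refine Multiset.prod_pos ?_
      intro x hx
      obtain ⟨w, hw, rfl⟩ := Multiset.mem_map.1 hx
      exact lt_trans zero_lt_one (hroots_big w (Multiset.mem_of_le hSle hw))
    have hPfact : P = (S.map (fun w => Valued.v w)).prod * (T.map (fun w => Valued.v w)).prod := by
      rw [hP, ← hST, Multiset.map_add, Multiset.prod_add]
    rw [hprodv, hPfact]
    exact lt_mul_of_one_lt_right hSpos hTprod
  have hesymmlt : Valued.v (R.esymm (m - j)) < P :=
    PF.multiset_sum_lt hPpos hterm
  have hfinal : Valued.v (h.coeff j) < Valued.v (h.coeff 0) := by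
    have he := Polynomial.coeff_eq_esymm_roots_of_card hcard hjd
    rw [he, hc0, Valuation.map_mul, Valuation.map_mul, Valuation.map_pow,
      Valuation.map_neg, Valuation.map_one, one_pow, mul_one]
    exact mul_lt_mul_of_pos_left hesymmlt hvlc
  rw [hj1] at hfinal
  exact absurd (lt_of_lt_of_le hfinal (hc 0)) (lt_irrefl _)

end LemA

section LemC
variable {K Kb : Type*} [Field K] [Valued K NNReal] [Field Kb] [Valued Kb NNReal]

lemma PF.pow_iterate_root {p : ℕ} (root : Kb → Kb) (hroot : ∀ x, root x ^ p = x) :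
    ∀ (n : ℕ) (x : Kb), (root^[n] x) ^ p ^ n = x := by
  intro n
  induction n with
  | zero => intro x; simp
  | succ n ih =>
    intro x
    rw [Function.iterate_succ_apply', pow_succ, mul_comm (p ^ n) p, pow_mul, hroot, ih]

lemma PF.sharp_add_approx {p : ℕ} (hp : p.Prime) (sharp : Kb →*₀ K)
    (hv : ∀ x : Kb, Valued.v (sharp x) = Valued.v x)
    (root : Kb → Kb) (hroot : ∀ x, root x ^ p = x)
    (hlim : ∀ x y : Kb, Filter.Tendsto
        (fun n => (sharp (root^[n] x) + sharp (root^[n] y)) ^ p ^ n)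
        Filter.atTop (nhds (sharp (x + y))))
    (x y : Kb) (hx : Valued.v x ≤ 1) (hy : Valued.v y ≤ 1) :
    Valued.v (sharp (x + y) - (sharp x + sharp y)) ≤ Valued.v (p : K) := by
  set μ := Valued.v (p : K) with hμ
  set s := sharp x + sharp y with hs
  have hkey : ∀ n : ℕ, Valued.v
      ((sharp (root^[n] x) + sharp (root^[n] y)) ^ p ^ n - s) ≤ μ := by
    intro n
    set a := sharp (root^[n] x) with haa
    set b := sharp (root^[n] y) with hbb
    set N := p ^ n with hN
    have hNpos : 0 < N := pow_pos hp.pos n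
    have hva : Valued.v a ≤ 1 := by
      rw [haa, hv]
      have h1 : (Valued.v (root^[n] x)) ^ N = Valued.v x := by
        rw [← Valuation.map_pow, PF.pow_iterate_root root hroot]
      have := h1 ▸ hx
      exact (pow_le_one_iff hNpos.ne').1 this
    have hvb : Valued.v b ≤ 1 := by
      rw [hbb, hv]
      have h1 : (Valued.v (root^[n] y)) ^ N = Valued.v y := by
        rw [← Valuation.map_pow, PF.pow_iterate_root root hroot]
      have := h1 ▸ hy
      exact (pow_le_one_iff hNpos.ne').1 this
    have haN : a ^ N = sharp x := by
      rw [haa, ← map_pow, PF.pow_iterate_root root hroot]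
    have hbN : b ^ N = sharp y := by
      rw [hbb, ← map_pow, PF.pow_iterate_root root hroot]
    -- binomial expansion
    obtain ⟨M, hM⟩ : ∃ M, N = M + 1 := ⟨N - 1, by omega⟩
    have hbinom := add_pow a b N
    have hsplit : (a + b) ^ N
        = a ^ N + b ^ N + ∑ i ∈ Finset.range M,
            a ^ (i + 1) * b ^ (N - (i + 1)) * (N.choose (i + 1) : K) := by
      rw [hbinom, hM, Finset.sum_range_succ, Finset.sum_range_succ']
      rw [← hM]
      simp [Nat.choose_self, Nat.choose_zero_right]
      ring
    rw [hsplit, haN, hbN, hs]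
    have : sharp x + sharp y + (∑ i ∈ Finset.range M,
        a ^ (i + 1) * b ^ (N - (i + 1)) * (N.choose (i + 1) : K))
        - (sharp x + sharp y)
        = ∑ i ∈ Finset.range M, a ^ (i + 1) * b ^ (N - (i + 1)) * (N.choose (i + 1) : K) := by
      ring
    rw [this]
    refine Valued.v.map_sum_le ?_
    intro i hi
    have hiM : i < M := Finset.mem_range.1 hi
    have hdvd : p ∣ N.choose (i + 1) := by
      refine hp.dvd_choose_pow (by omega) ?_
      rw [← hN] at *; omega
    obtain ⟨t, ht⟩ := hdvd
    have hcast : ((N.choose (i + 1) : ℕ) : K) = (p : K) * (t : K) := by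
      rw [ht]; push_cast; ring
    rw [hcast, Valuation.map_mul, Valuation.map_mul, Valuation.map_mul,
      Valuation.map_pow, Valuation.map_pow]
    calc Valued.v a ^ (i + 1) * Valued.v b ^ (N - (i + 1)) * (μ * Valued.v (t : K))
        ≤ 1 ^ (i + 1) * 1 ^ (N - (i + 1)) * (μ * 1) := by
          gcongr <;> first
            | exact hva
            | exact hvb
            | exact PF.v_natCast_le_one t
            | exact zero_le _
      _ = μ := by simp
  have hclosed := PF.isClosed_vball s μ
  have hmem : sharp (x + y) ∈ {u : K | Valued.v (u - s) ≤ μ} :=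
    hclosed.mem_of_tendsto (hlim x y) (Filter.Eventually.of_forall hkey)
  exact hmem

lemma PF.sharp_sum_approx {p : ℕ} (hp : p.Prime) (sharp : Kb →*₀ K)
    (hv : ∀ x : Kb, Valued.v (sharp x) = Valued.v x)
    (root : Kb → Kb) (hroot : ∀ x, root x ^ p = x)
    (hlim : ∀ x y : Kb, Filter.Tendsto
        (fun n => (sharp (root^[n] x) + sharp (root^[n] y)) ^ p ^ n)
        Filter.atTop (nhds (sharp (x + y))))
    (z : ℕ → Kb) (hz : ∀ i, Valued.v (z i) ≤ 1) (n : ℕ) :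
    Valued.v (sharp (∑ i ∈ Finset.range n, z i) - ∑ i ∈ Finset.range n, sharp (z i))
      ≤ Valued.v (p : K) := by
  induction n with
  | zero => simp
  | succ n ih =>
    have hS : Valued.v (∑ i ∈ Finset.range n, z i) ≤ 1 :=
      Valued.v.map_sum_le fun i _ => hz i
    rw [Finset.sum_range_succ, Finset.sum_range_succ]
    have hdecomp : sharp (∑ i ∈ Finset.range n, z i + z n)
        - (∑ i ∈ Finset.range n, sharp (z i) + sharp (z n))
        = (sharp (∑ i ∈ Finset.range n, z i + z n)
            - (sharp (∑ i ∈ Finset.range n, z i) + sharp (z n)))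
          + (sharp (∑ i ∈ Finset.range n, z i) - ∑ i ∈ Finset.range n, sharp (z i)) := by
      ring
    rw [hdecomp]
    refine le_trans (Valued.v.map_add _ _) (max_le ?_ ih)
    exact PF.sharp_add_approx hp sharp hv root hroot hlim _ _ hS (hz n)

end LemC

section LemB
variable {K Kb : Type*} [Field K] [Valued K NNReal] [Field Kb] [Valued Kb NNReal]

lemma PF.approx_root [IsAlgClosed Kb] {p : ℕ} (hp : p.Prime) (sharp : Kb →*₀ K)
    (hv : ∀ x : Kb, Valued.v (sharp x) = Valued.v x)
    (root : Kb → Kb) (hroot : ∀ x, root x ^ p = x)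
    (hlim : ∀ x y : Kb, Filter.Tendsto
        (fun n => (sharp (root^[n] x) + sharp (root^[n] y)) ^ p ^ n)
        Filter.atTop (nhds (sharp (x + y))))
    (ϖ : K) (hϖp : Valued.v (p : K) ≤ Valued.v ϖ) (hϖ1 : Valued.v ϖ < 1)
    (hsurj : ∀ a : K, Valued.v a ≤ 1 → ∃ x : Kb, Valued.v (a - sharp x) ≤ Valued.v ϖ)
    (g : K[X]) (hc : ∀ i, Valued.v (g.coeff i) ≤ 1)
    {j : ℕ} (hj : 1 ≤ j) (hj1 : Valued.v (g.coeff j) = 1) :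
    ∃ y : K, Valued.v y ≤ 1 ∧ Valued.v (g.eval y) ≤ Valued.v ϖ := by
  classical
  set n := g.natDegree with hn
  have hcj : g.coeff j ≠ 0 := by
    intro h0; rw [h0] at hj1; simp at hj1
  have hjn : j ≤ n := le_natDegree_of_ne_zero hcj
  set z : ℕ → Kb := fun i => Classical.choose (hsurj (g.coeff i) (hc i)) with hz
  have hzi : ∀ i, Valued.v (g.coeff i - sharp (z i)) ≤ Valued.v ϖ :=
    fun i => Classical.choose_spec (hsurj (g.coeff i) (hc i))
  have hsharpz : ∀ i, Valued.v (sharp (z i)) ≤ 1 := by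
    intro i
    have : sharp (z i) = g.coeff i - (g.coeff i - sharp (z i)) := by ring
    rw [this]
    exact le_trans (Valued.v.map_sub _ _) (max_le (hc i) (le_trans (hzi i) hϖ1.le))
  have hz1 : ∀ i, Valued.v (z i) ≤ 1 := fun i => (hv (z i)) ▸ hsharpz i
  have hzj : Valued.v (z j) = 1 := by
    rw [← hv]
    rw [PF.v_eq_of_sub_lt (a := g.coeff j) (b := sharp (z j)) ?_, hj1]
    rw [hj1]
    exact lt_of_le_of_lt (hzi j) hϖ1
  set h : Kb[X] := ∑ i ∈ Finset.range (n + 1), Polynomial.C (z i) * Polynomial.X ^ i with hh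
  have hcoeff : ∀ k, k ≤ n → h.coeff k = z k := by
    intro k hk
    rw [hh, Polynomial.finset_sum_coeff]
    simp only [Polynomial.coeff_C_mul, Polynomial.coeff_X_pow]
    rw [Finset.sum_eq_single k]
    · simp
    · intro b _ hbk
      simp [Ne.symm hbk]
    · intro hkk
      exact absurd (Finset.mem_range.2 (by omega)) (fun c => hkk c)
  have hcoeff' : ∀ k, Valued.v (h.coeff k) ≤ 1 := by
    intro k
    by_cases hk : k ≤ n
    · rw [hcoeff k hk]; exact hz1 k
    · have : h.coeff k = 0 := by
        rw [hh, Polynomial.finset_sum_coeff]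
        apply Finset.sum_eq_zero
        intro i hi
        have : i ≤ n := by
          have := Finset.mem_range.1 hi; omega
        simp only [Polynomial.coeff_C_mul, Polynomial.coeff_X_pow]
        rw [if_neg (by omega)]
        simp
      rw [this]; simp
  obtain ⟨w, hw0, hw1⟩ := PF.exists_small_root h hcoeff' hj (by rw [hcoeff j hjn]; exact hzj)
  set y := sharp w with hy
  have hvy : Valued.v y ≤ 1 := (hv w) ▸ hw1
  have hwz : ∀ i, Valued.v (z i * w ^ i) ≤ 1 := by
    intro i
    rw [Valuation.map_mul, Valuation.map_pow]
    calc Valued.v (z i) * Valued.v w ^ i ≤ 1 * 1 ^ i := by gcongr; exact hz1 i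
      _ = 1 := by simp
  have hevalh : (∑ i ∈ Finset.range (n + 1), z i * w ^ i) = 0 := by
    have : h.eval w = ∑ i ∈ Finset.range (n + 1), z i * w ^ i := by
      rw [hh, Polynomial.eval_finset_sum]
      simp
    rw [← this, hw0]
  have hA : Valued.v (∑ i ∈ Finset.range (n + 1), sharp (z i * w ^ i)) ≤ Valued.v ϖ := by
    have := PF.sharp_sum_approx hp sharp hv root hroot hlim
      (fun i => z i * w ^ i) hwz (n + 1)
    rw [hevalh, map_zero, zero_sub, Valuation.map_neg] at this
    exact le_trans this hϖp
  refine ⟨y, hvy, ?_⟩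
  have hgeval : g.eval y = ∑ i ∈ Finset.range (n + 1), g.coeff i * y ^ i :=
    Polynomial.eval_eq_sum_range' (by omega) y
  have hdiff : Valued.v (g.eval y - ∑ i ∈ Finset.range (n + 1), sharp (z i * w ^ i))
      ≤ Valued.v ϖ := by
    rw [hgeval, ← Finset.sum_sub_distrib]
    refine Valued.v.map_sum_le ?_
    intro i _
    have : sharp (z i * w ^ i) = sharp (z i) * y ^ i := by
      rw [map_mul, map_pow]
    rw [this]
    have : g.coeff i * y ^ i - sharp (z i) * y ^ i = (g.coeff i - sharp (z i)) * y ^ i := by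
      ring
    rw [this, Valuation.map_mul, Valuation.map_pow]
    calc Valued.v (g.coeff i - sharp (z i)) * Valued.v y ^ i
        ≤ Valued.v ϖ * 1 ^ i := by gcongr; exact hzi i
      _ = Valued.v ϖ := by simp
  have : g.eval y = (g.eval y - ∑ i ∈ Finset.range (n + 1), sharp (z i * w ^ i))
      + ∑ i ∈ Finset.range (n + 1), sharp (z i * w ^ i) := by ring
  rw [this]
  exact le_trans (Valued.v.map_add _ _) (max_le hdiff hA)

end LemB

section Helpers
variable {K : Type*} [Field K] [Valued K NNReal]

lemma PF.coeff_mk (b : ℕ → K) (n k : ℕ) :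
    (∑ i ∈ Finset.range (n + 1), Polynomial.C (b i) * Polynomial.X ^ i).coeff k
      = if k ≤ n then b k else 0 := by
  rw [Polynomial.finset_sum_coeff]
  simp only [Polynomial.coeff_C_mul, Polynomial.coeff_X_pow]
  by_cases hk : k ≤ n
  · rw [if_pos hk, Finset.sum_eq_single k]
    · simp
    · intro i _ hik; simp [Ne.symm hik]
    · intro hkk; exact absurd (Finset.mem_range.2 (by omega)) hkk
  · rw [if_neg hk]
    apply Finset.sum_eq_zero
    intro i hi
    have := Finset.mem_range.1 hi
    rw [if_neg (by omega)]
    simp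

lemma PF.eval_mk (b : ℕ → K) (n : ℕ) (t : K) :
    (∑ i ∈ Finset.range (n + 1), Polynomial.C (b i) * Polynomial.X ^ i).eval t
      = ∑ i ∈ Finset.range (n + 1), b i * t ^ i := by
  rw [Polynomial.eval_finset_sum]
  simp

lemma PF.v_eval_le_one (g : K[X]) (hg : ∀ i, Valued.v (g.coeff i) ≤ 1)
    {t : K} (ht : Valued.v t ≤ 1) : Valued.v (g.eval t) ≤ 1 := by
  rw [Polynomial.eval_eq_sum_range]
  refine Valued.v.map_sum_le ?_
  intro i _
  rw [Valuation.map_mul, Valuation.map_pow]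
  calc Valued.v (g.coeff i) * Valued.v t ^ i ≤ 1 * 1 ^ i := by gcongr; exact hg i
    _ = 1 := by simp

end Helpers

section LemD
variable {K Kb : Type*} [Field K] [Valued K NNReal] [Field Kb] [Valued Kb NNReal]

lemma PF.exists_pow_val [IsAlgClosed Kb] (sharp : Kb →*₀ K)
    (hv : ∀ x : Kb, Valued.v (sharp x) = Valued.v x)
    (hΓ : ∀ a : K, a ≠ 0 → ∃ x : Kb, Valued.v (sharp x) = Valued.v a)
    (a : K) {d : ℕ} (hd : 0 < d) :
    ∃ c : K, Valued.v c ^ d = Valued.v a := by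
  by_cases ha : a = 0
  · exact ⟨0, by simp [ha, zero_pow hd.ne']⟩
  obtain ⟨x, hx⟩ := hΓ a ha
  obtain ⟨b, hb⟩ := IsAlgClosed.exists_pow_nat_eq x hd
  refine ⟨sharp b, ?_⟩
  rw [hv, ← Valuation.map_pow, hb, ← hv, hx]

end LemD

section Step
variable {K Kb : Type*} [Field K] [Valued K NNReal] [Field Kb] [Valued Kb NNReal]

lemma PF.newton_step [IsAlgClosed Kb] {p : ℕ} (hp : p.Prime) (sharp : Kb →*₀ K)
    (hv : ∀ x : Kb, Valued.v (sharp x) = Valued.v x)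
    (root : Kb → Kb) (hroot : ∀ x, root x ^ p = x)
    (hlim : ∀ x y : Kb, Filter.Tendsto
        (fun n => (sharp (root^[n] x) + sharp (root^[n] y)) ^ p ^ n)
        Filter.atTop (nhds (sharp (x + y))))
    (ϖ : K) (hϖp : Valued.v (p : K) ≤ Valued.v ϖ) (hϖ1 : Valued.v ϖ < 1)
    (hΓ : ∀ a : K, a ≠ 0 → ∃ x : Kb, Valued.v (sharp x) = Valued.v a)
    (hsurj : ∀ a : K, Valued.v a ≤ 1 → ∃ x : Kb, Valued.v (a - sharp x) ≤ Valued.v ϖ)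
    (f : K[X]) (hm : f.Monic) (hd : 0 < f.natDegree)
    (hc : ∀ i, Valued.v (f.coeff i) ≤ 1)
    (x : K) (hx : Valued.v x ≤ 1) :
    ∃ x' : K, Valued.v x' ≤ 1 ∧
      (Valued.v (x' - x)) ^ f.natDegree ≤ Valued.v (f.eval x) ∧
      Valued.v (f.eval x') ≤ Valued.v (f.eval x) * Valued.v ϖ := by
  classical
  set d := f.natDegree with hdd
  by_cases hfx : f.eval x = 0
  · exact ⟨x, hx, by simp [hfx, zero_pow hd.ne'], by simp [hfx]⟩
  set r := Valued.v (f.eval x) with hr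
  have hrne : r ≠ 0 := (Valuation.ne_zero_iff Valued.v).2 hfx
  have hr1 : r ≤ 1 := PF.v_eval_le_one f hc hx
  set F := Polynomial.taylor x f with hF
  have hFd : F.natDegree = d := Polynomial.natDegree_taylor f x
  have hFm : F.Monic := by
    rw [hF, Polynomial.taylor_apply]
    exact hm.comp_X_add_C x
  have hFlead : F.coeff d = 1 := by
    have := hFm.leadingCoeff
    rwa [Polynomial.leadingCoeff, hFd] at this
  have hF0 : F.coeff 0 = f.eval x := Polynomial.taylor_coeff_zero x f
  have hFc : ∀ i, Valued.v (F.coeff i) ≤ 1 := by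
    intro i
    rw [hF, Polynomial.taylor_coeff]
    refine PF.v_eval_le_one _ ?_ hx
    intro k
    rw [Polynomial.hasseDeriv_coeff]
    rw [Valuation.map_mul]
    calc Valued.v ((((k + i).choose i : ℕ) : K)) * Valued.v (f.coeff (k + i))
        ≤ 1 * 1 := by gcongr; exacts [PF.v_natCast_le_one _, hc _]
      _ = 1 := by simp
  -- choose normalizing elements
  have cex : ∀ j : ℕ, 0 < j → ∃ c : K, Valued.v c ^ j = Valued.v (f.eval x / F.coeff j) :=
    fun j hj => PF.exists_pow_val sharp hv hΓ _ hj
  set cfun : ℕ → K := fun j => if hj : 0 < j then Classical.choose (cex j hj) else 0 with hcfun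
  have hcspec : ∀ j : ℕ, 0 < j → Valued.v (cfun j) ^ j = r / Valued.v (F.coeff j) := by
    intro j hj
    rw [hcfun]
    simp only [dif_pos hj]
    rw [Classical.choose_spec (cex j hj), map_div₀]
  set J : Finset ℕ := (Finset.Icc 1 d).filter (fun j => F.coeff j ≠ 0) with hJ
  have hdJ : d ∈ J := by
    rw [hJ, Finset.mem_filter, Finset.mem_Icc]
    exact ⟨⟨hd, le_refl d⟩, by rw [hFlead]; exact one_ne_zero⟩
  obtain ⟨j0, hj0J, hj0min⟩ := J.exists_min_image (fun j => Valued.v (cfun j)) ⟨d, hdJ⟩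
  have hj0 : 1 ≤ j0 ∧ j0 ≤ d ∧ F.coeff j0 ≠ 0 := by
    rw [hJ, Finset.mem_filter, Finset.mem_Icc] at hj0J
    exact ⟨hj0J.1.1, hj0J.1.2, hj0J.2⟩
  set c := cfun j0 with hcc
  have hvaj0 : Valued.v (F.coeff j0) ≠ 0 := (Valuation.ne_zero_iff Valued.v).2 hj0.2.2
  have hcj0 : Valued.v c ^ j0 = r / Valued.v (F.coeff j0) := hcspec j0 hj0.1
  have hRHS : Valued.v (F.coeff j0) * Valued.v c ^ j0 = r := by
    rw [hcj0, mul_div_cancel₀ _ hvaj0]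
  -- v c ≤ v (cfun d) and v(cfun d)^d = r
  have hcd : Valued.v (cfun d) ^ d = r := by
    rw [hcspec d hd, hFlead]; simp
  have hcled : Valued.v c ≤ Valued.v (cfun d) := hj0min d hdJ
  have hc1 : Valued.v c ≤ 1 := by
    have h1 : Valued.v (cfun d) ^ d ≤ 1 := by rw [hcd]; exact hr1
    exact le_trans hcled ((pow_le_one_iff hd.ne').1 h1)
  have hcdr : Valued.v c ^ d ≤ r := by
    rw [← hcd]
    exact pow_le_pow_left₀ zero_le hcled d
  -- key coefficient bound
  have hkey : ∀ j, j ≤ d → Valued.v (F.coeff j) * Valued.v c ^ j ≤ r := by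
    intro j hjd
    rcases Nat.eq_zero_or_pos j with hj0' | hjpos
    · subst hj0'
      rw [hF0, pow_zero, mul_one, hr]
    · by_cases haj : F.coeff j = 0
      · simp [haj]
      · have hjJ : j ∈ J := by
          rw [hJ, Finset.mem_filter, Finset.mem_Icc]
          exact ⟨⟨hjpos, hjd⟩, haj⟩
        have hle : Valued.v c ≤ Valued.v (cfun j) := hj0min j hjJ
        have : Valued.v c ^ j ≤ Valued.v (cfun j) ^ j := pow_le_pow_left₀ zero_le hle j
        calc Valued.v (F.coeff j) * Valued.v c ^ j
            ≤ Valued.v (F.coeff j) * (Valued.v (cfun j) ^ j) := by gcongr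
          _ = Valued.v (F.coeff j) * (r / Valued.v (F.coeff j)) := by rw [hcspec j hjpos]
          _ = r := mul_div_cancel₀ _ ((Valuation.ne_zero_iff Valued.v).2 haj)
  -- the rescaled polynomial
  set D := F.coeff j0 * c ^ j0 with hD
  have hvD : Valued.v D = r := by rw [hD, Valuation.map_mul, Valuation.map_pow, hRHS]
  have hDne : D ≠ 0 := by
    intro h0
    rw [h0] at hvD; simp at hvD; exact hrne hvD.symm
  set g : K[X] := ∑ i ∈ Finset.range (d + 1),
    Polynomial.C (F.coeff i * c ^ i / D) * Polynomial.X ^ i with hg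
  have hgc : ∀ i, Valued.v (g.coeff i) ≤ 1 := by
    intro i
    rw [hg, PF.coeff_mk]
    by_cases hi : i ≤ d
    · rw [if_pos hi, map_div₀, Valuation.map_mul, Valuation.map_pow, hvD]
      rw [div_le_one (lt_of_le_of_ne zero_le (Ne.symm hrne))]
      exact hkey i hi
    · rw [if_neg hi]; simp
  have hgj0 : Valued.v (g.coeff j0) = 1 := by
    rw [hg, PF.coeff_mk, if_pos (le_trans hj0.2.1 (le_refl d)), ← hD, div_self hDne]
    simp
  obtain ⟨y, hy1, hgy⟩ := PF.approx_root hp sharp hv root hroot hlim ϖ hϖp hϖ1 hsurj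
    g hgc hj0.1 hgj0
  -- assemble
  refine ⟨x + c * y, ?_, ?_, ?_⟩
  · refine le_trans (Valued.v.map_add _ _) (max_le hx ?_)
    rw [Valuation.map_mul]
    calc Valued.v c * Valued.v y ≤ 1 * 1 := by gcongr
      _ = 1 := by simp
  · have : x + c * y - x = c * y := by ring
    rw [this, Valuation.map_mul]
    calc (Valued.v c * Valued.v y) ^ d ≤ (Valued.v c * 1) ^ d := by gcongr
      _ = Valued.v c ^ d := by simp
      _ ≤ r := hcdr
  · have heval : f.eval (x + c * y) = D * g.eval y := by
      have h1 : f.eval (x + c * y) = F.eval (c * y) := by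
        rw [hF, Polynomial.taylor_eval]
        ring_nf
      have h2 : F.eval (c * y) = ∑ i ∈ Finset.range (d + 1), F.coeff i * (c * y) ^ i := by
        refine Polynomial.eval_eq_sum_range' ?_ _
        omega
      rw [h1, h2, hg, PF.eval_mk, Finset.mul_sum]
      refine Finset.sum_congr rfl ?_
      intro i _
      field_simp
      ring
    rw [heval, Valuation.map_mul, hvD]
    exact mul_le_mul_right hgy r

end Step

section Limit
variable {K Kb : Type*} [Field K] [Valued K NNReal] [Field Kb] [Valued Kb NNReal]

lemma PF.exists_root_of_integral [CompleteSpace K] [IsAlgClosed Kb]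
    {p : ℕ} (hp : p.Prime) (sharp : Kb →*₀ K)
    (hv : ∀ x : Kb, Valued.v (sharp x) = Valued.v x)
    (root : Kb → Kb) (hroot : ∀ x, root x ^ p = x)
    (hlim : ∀ x y : Kb, Filter.Tendsto
        (fun n => (sharp (root^[n] x) + sharp (root^[n] y)) ^ p ^ n)
        Filter.atTop (nhds (sharp (x + y))))
    (ϖ : K) (hϖ0 : ϖ ≠ 0) (hϖp : Valued.v (p : K) ≤ Valued.v ϖ) (hϖ1 : Valued.v ϖ < 1)
    (hΓ : ∀ a : K, a ≠ 0 → ∃ x : Kb, Valued.v (sharp x) = Valued.v a)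
    (hsurj : ∀ a : K, Valued.v a ≤ 1 → ∃ x : Kb, Valued.v (a - sharp x) ≤ Valued.v ϖ)
    (f : K[X]) (hm : f.Monic) (hd : 0 < f.natDegree)
    (hc : ∀ i, Valued.v (f.coeff i) ≤ 1) :
    ∃ x : K, f.eval x = 0 := by
  classical
  set d := f.natDegree with hdd
  set W := Valued.v ϖ with hW
  have hWpos : 0 < W := by
    rw [hW, pos_iff_ne_zero]
    exact (Valuation.ne_zero_iff Valued.v).2 hϖ0
  -- construct the approximating sequence
  have step := fun (t : K) (ht : Valued.v t ≤ 1) =>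
    PF.newton_step hp sharp hv root hroot hlim ϖ hϖp hϖ1 hΓ hsurj f hm hd hc t ht
  let T : ℕ → Type _ := fun n => {t : K // Valued.v t ≤ 1 ∧ Valued.v (f.eval t) ≤ W ^ n}
  have hz : Valued.v (f.eval 0) ≤ W ^ 0 := by
    rw [pow_zero, ← Polynomial.coeff_zero_eq_eval_zero]
    exact hc 0
  let u : ∀ n : ℕ, T n := fun n => Nat.rec
    (⟨0, by simp, hz⟩ : T 0)
    (fun n prev => ⟨Classical.choose (step prev.1 prev.2.1),
      (Classical.choose_spec (step prev.1 prev.2.1)).1,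
      by
        refine le_trans (Classical.choose_spec (step prev.1 prev.2.1)).2.2 ?_
        rw [pow_succ]
        exact mul_le_mul_left prev.2.2 W⟩) n
  set x : ℕ → K := fun n => (u n).1 with hx
  have hx1 : ∀ n, Valued.v (x n) ≤ 1 := fun n => (u n).2.1
  have hxf : ∀ n, Valued.v (f.eval (x n)) ≤ W ^ n := fun n => (u n).2.2
  have hxdiff : ∀ n, (Valued.v (x (n + 1) - x n)) ^ d ≤ W ^ n := by
    intro n
    have hspec := (Classical.choose_spec (step (u n).1 (u n).2.1)).2.1
    exact le_trans hspec (hxf n)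
  -- difference bounds
  have hW1 : W ≤ 1 := hϖ1.le
  have hdelta : ∀ n, Valued.v (x (n + 1) - x n) ≤ W ^ (n / d) := by
    intro n
    have h1 : (Valued.v (x (n + 1) - x n)) ^ d ≤ (W ^ (n / d)) ^ d := by
      rw [← pow_mul]
      refine le_trans (hxdiff n) ?_
      exact pow_le_pow_of_le_one zero_le hW1 (Nat.div_mul_le_self n d)
    exact (pow_le_pow_iff_left₀ zero_le zero_le hd.ne').1 h1
  have hbound : ∀ n m, n ≤ m → Valued.v (x m - x n) ≤ W ^ (n / d) := by
    intro n m hnm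
    induction m, hnm using Nat.le_induction with
    | base => simp
    | succ m hnm ih =>
      have hdecomp : x (m + 1) - x n = (x (m + 1) - x m) + (x m - x n) := by ring
      rw [hdecomp]
      refine le_trans (Valued.v.map_add _ _) (max_le ?_ ih)
      refine le_trans (hdelta m) ?_
      exact pow_le_pow_of_le_one zero_le hW1 (Nat.div_le_div_right hnm)
  -- Cauchy
  have hcauchy : CauchySeq x := by
    rw [(Valued.hasBasis_uniformity K NNReal).cauchySeq_iff]
    intro γ _
    have hγpos : (0 : NNReal) < MonoidWithZeroHom.ValueGroup₀.embedding γ.1 := MonoidWithZeroHom.ValueGroup₀.embedding_unit_pos γ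
    obtain ⟨k, hk⟩ := exists_pow_lt_of_lt_one hγpos hϖ1
    refine ⟨d * k, ?_⟩
    intro m hm' n hn'
    simp only [Set.mem_setOf_eq, Valuation.restrict_lt_iff_lt_embedding]
    have key : ∀ a b, d * k ≤ a → a ≤ b → Valued.v (x b - x a) < MonoidWithZeroHom.ValueGroup₀.embedding γ.1 := by
      intro a b ha hab
      refine lt_of_le_of_lt (hbound a b hab) (lt_of_le_of_lt ?_ hk)
      refine pow_le_pow_of_le_one zero_le hW1 ?_
      exact (Nat.le_div_iff_mul_le hd).2 (by rwa [Nat.mul_comm] at ha)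
    rcases le_total m n with h | h
    · exact key m n hm' h
    · rw [← Valuation.map_neg]
      have hneg : -(x n - x m) = x m - x n := by ring
      rw [hneg]
      exact key n m hn' h
  obtain ⟨ξ, hξ⟩ := cauchySeq_tendsto_of_complete hcauchy
  refine ⟨ξ, ?_⟩
  have hcont : Filter.Tendsto (fun n => f.eval (x n)) Filter.atTop (nhds (f.eval ξ)) :=
    (f.continuous.tendsto ξ).comp hξ
  have hzero : Filter.Tendsto (fun n => f.eval (x n)) Filter.atTop (nhds (0 : K)) := by
    rw [(Valued.hasBasis_nhds_zero K NNReal).tendsto_right_iff]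
    intro γ _
    obtain ⟨k, hk⟩ := exists_pow_lt_of_lt_one (MonoidWithZeroHom.ValueGroup₀.embedding_unit_pos γ) hϖ1
    rw [Filter.eventually_atTop]
    refine ⟨k, fun n hn => ?_⟩
    simp only [Set.mem_setOf_eq, Valuation.restrict_lt_iff_lt_embedding]
    refine lt_of_le_of_lt (le_trans (hxf n) ?_) hk
    exact pow_le_pow_of_le_one zero_le hW1 hn
  exact tendsto_nhds_unique hcont hzero

end Limit

/-- If the tilt `K^♭` of a perfectoid field `K` is algebraically closed, then `K` is
algebraically closed.  The tilt is encoded abstractly: `Kb` is a perfectoid field of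
characteristic `p` together with the multiplicative projection `sharp : K^♭ → K`
preserving the valuation, with `|K^{♭×}| = |K^×|` (`hΓ`), the limit formula for the
addition of the tilt (`hlim`), and `K^{♭°}/ϖ^♭ ≅ K°/ϖ` via `sharp` (`hsurj`). -/
theorem isAlgClosed_of_tilt_isAlgClosed
    (K Kb : Type*) [Field K] [Valued K NNReal] [CompleteSpace K]
    [Field Kb] [Valued Kb NNReal] [CompleteSpace Kb]
    (p : ℕ) (hp : p.Prime) [CharP Kb p]
    (hK : IsPerfectoidField K p) (hKb : IsPerfectoidField Kb p)
    (ϖ : K) (hϖ0 : ϖ ≠ 0) (hϖp : Valued.v (p : K) ≤ Valued.v ϖ) (hϖ1 : Valued.v ϖ < 1)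
    (sharp : Kb →*₀ K)
    (hv : ∀ x : Kb, Valued.v (sharp x) = Valued.v x)
    (root : Kb → Kb) (hroot : ∀ x, root x ^ p = x)
    (hlim : ∀ x y : Kb, Filter.Tendsto
        (fun n => (sharp (root^[n] x) + sharp (root^[n] y)) ^ p ^ n)
        Filter.atTop (nhds (sharp (x + y))))
    (hΓ : ∀ a : K, a ≠ 0 → ∃ x : Kb, Valued.v (sharp x) = Valued.v a)
    (hsurj : ∀ a : K, Valued.v a ≤ 1 → ∃ x : Kb, Valued.v (a - sharp x) ≤ Valued.v ϖ)
    [IsAlgClosed Kb] :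
    IsAlgClosed K := by
  classical
  apply IsAlgClosed.of_exists_root
  intro P hPm hPirr
  set d := P.natDegree with hdd
  have hd : 0 < d := by
    rw [hdd, Polynomial.natDegree_pos_iff_degree_pos]
    exact Polynomial.degree_pos_of_irreducible hPirr
  -- bound on the coefficients
  set B : NNReal := (Finset.range (d + 1)).sup (fun i => Valued.v (P.coeff i)) with hB
  have hBpos : 0 < B := by
    have : Valued.v (P.coeff d) ≤ B :=
      Finset.le_sup (f := fun i => Valued.v (P.coeff i)) (Finset.self_mem_range_succ d)
    have hPd : P.coeff d = 1 := hPm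
    rw [hPd] at this
    simp only [Valuation.map_one] at this
    exact lt_of_lt_of_le zero_lt_one this
  obtain ⟨m, hm⟩ := exists_pow_lt_of_lt_one (inv_pos.2 hBpos) hϖ1
  have hmB : Valued.v ϖ ^ m * B ≤ 1 := by
    calc Valued.v ϖ ^ m * B ≤ B⁻¹ * B := by gcongr <;> exact hm.le
      _ = 1 := inv_mul_cancel₀ hBpos.ne'
  -- the rescaled polynomial
  set g : K[X] := ∑ i ∈ Finset.range (d + 1),
    Polynomial.C (P.coeff i * ϖ ^ (m * (d - i))) * Polynomial.X ^ i with hg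
  have hgcoeff : ∀ k, g.coeff k = if k ≤ d then P.coeff k * ϖ ^ (m * (d - k)) else 0 :=
    fun k => PF.coeff_mk _ d k
  have hgd : g.coeff d = 1 := by
    rw [hgcoeff d, if_pos (le_refl d)]
    have hPd : P.coeff d = 1 := hPm
    simp [hPd]
  have hgnat : g.natDegree = d := by
    refine le_antisymm ?_ (Polynomial.le_natDegree_of_ne_zero (by rw [hgd]; exact one_ne_zero))
    refine Polynomial.natDegree_le_iff_coeff_eq_zero.2 ?_
    intro k hk
    rw [hgcoeff k, if_neg (by omega)]
  have hgm : g.Monic := by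
    rw [Polynomial.Monic, Polynomial.leadingCoeff, hgnat, hgd]
  have hgc : ∀ i, Valued.v (g.coeff i) ≤ 1 := by
    intro i
    rw [hgcoeff i]
    by_cases hi : i ≤ d
    · rw [if_pos hi]
      rcases eq_or_lt_of_le hi with rfl | hilt
      · have hPd : P.coeff d = 1 := hPm
        rw [Nat.sub_self, Nat.mul_zero, pow_zero, mul_one, hPd, Valuation.map_one]
      · rw [Valuation.map_mul, Valuation.map_pow]
        have h1 : Valued.v (P.coeff i) ≤ B :=
          Finset.le_sup (f := fun k => Valued.v (P.coeff k)) (Finset.mem_range.2 (by omega))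
        have h2 : Valued.v ϖ ^ (m * (d - i)) ≤ Valued.v ϖ ^ m := by
          refine pow_le_pow_of_le_one zero_le hϖ1.le ?_
          have : 1 ≤ d - i := by omega
          calc m = m * 1 := (mul_one m).symm
            _ ≤ m * (d - i) := by gcongr
        calc Valued.v (P.coeff i) * Valued.v ϖ ^ (m * (d - i))
            ≤ B * Valued.v ϖ ^ m := by gcongr
          _ = Valued.v ϖ ^ m * B := mul_comm _ _
          _ ≤ 1 := hmB
    · rw [if_neg hi]; simp
  obtain ⟨ξ, hξ⟩ := PF.exists_root_of_integral hp sharp hv root hroot hlim ϖ hϖ0 hϖp hϖ1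
    hΓ hsurj g hgm (by rw [hgnat]; exact hd) hgc
  -- transfer the root back
  refine ⟨ξ / ϖ ^ m, ?_⟩
  have hϖm : (ϖ : K) ^ m ≠ 0 := pow_ne_zero m hϖ0
  have hPev : P.eval (ξ / ϖ ^ m) = ∑ i ∈ Finset.range (d + 1), P.coeff i * (ξ / ϖ ^ m) ^ i :=
    Polynomial.eval_eq_sum_range' (by omega) _
  have hgev : g.eval ξ = ∑ i ∈ Finset.range (d + 1), P.coeff i * ϖ ^ (m * (d - i)) * ξ ^ i := by
    rw [hg, PF.eval_mk]
  have hfac : ϖ ^ (m * d) * P.eval (ξ / ϖ ^ m) = g.eval ξ := by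
    rw [hPev, hgev, Finset.mul_sum]
    refine Finset.sum_congr rfl ?_
    intro i hi
    have hid : i ≤ d := by have := Finset.mem_range.1 hi; omega
    have hsplit : m * d = m * (d - i) + m * i := by
      rw [← Nat.mul_add]
      congr 1
      omega
    have hne : (ϖ : K) ^ (m * i) ≠ 0 := pow_ne_zero _ hϖ0
    rw [hsplit, pow_add, div_pow, ← pow_mul]
    rw [mul_assoc, mul_comm (ϖ ^ (m * i)), mul_assoc, div_mul_cancel₀ _ hne]
    ring
  have : ϖ ^ (m * d) * P.eval (ξ / ϖ ^ m) = 0 := by rw [hfac, hξ]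
  rcases mul_eq_zero.1 this with h | h
  · exact absurd h (pow_ne_zero _ hϖ0)
  · exact h
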